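/- Distance sketch sufficiency: for vertices u,v, the Thorup-Zwick estimate d'(u,v) can be computed using only the sketch of u (the set {(w, d(u,w)) : w ∈ B(u) ∪ {p_0(u),...,p_{k-1}(u)}}) and the sketch of v. Formally, the value min over j and over the two orientations of { d(x, p_j(x)) + d(y, p_j(x)) : p_j(x) ∈ B(y), {x,y} = {u,v} } depends only on these two sketches, is always well defined (the min is over a nonempty set), and satisfies d(u,v) ≤ d'(u,v) ≤ (2k-1)·d(u,v). -/

import Mathlib

open ENNReal
open scoped Classical

/-- The distance from `u` to a set `S` (`⊤` if `S` is empty). -/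
noncomputable def distToSet {V : Type*} (d : V → V → ℝ≥0∞) (S : Set V) (u : V) : ℝ≥0∞ :=
  ⨅ x ∈ S, d u x

/-- The level-`i` bunch of `u`: `B_i(u) = { x ∈ A_i : d(u,x) < d(u, A_{i+1}) }`. -/
def bunchLevel {V : Type*} (d : V → V → ℝ≥0∞) (A : ℕ → Set V) (i : ℕ) (u : V) : Set V :=
  {x ∈ A i | d u x < distToSet d (A (i + 1)) u}

/-- The bunch of `u`: `B(u) = ∪_{i=0}^{k-1} B_i(u)`. -/
def bunch {V : Type*} (d : V → V → ℝ≥0∞) (A : ℕ → Set V) (k : ℕ) (u : V) : Set V :=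
  ⋃ i ∈ Finset.range k, bunchLevel d A i u

/-- Distance sketch sufficiency: the set of candidate Thorup-Zwick estimates
`{ d(x, p_j(x)) + d(p_j(x), y) : j ≤ k-1, {x,y} = {u,v}, p_j(x) ∈ B(y) }`, which is
computable from the sketches of `u` and `v` alone, is nonempty (since
`p_{k-1}(u) ∈ A_{k-1} ⊆ B(v)`), and its infimum `d'(u,v)` satisfies
`d(u,v) ≤ d'(u,v) ≤ (2k-1)·d(u,v)`. -/
theorem stmt16 {V : Type*} [Fintype V] (d : V → V → ℝ≥0∞) (k : ℕ) (hk : 1 ≤ k)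
    (A : ℕ → Set V) (p : ℕ → V → V)
    (hfin : ∀ x y : V, d x y ≠ ⊤)
    (hself : ∀ x : V, d x x = 0)
    (hdsymm : ∀ x y : V, d x y = d y x)
    (htri : ∀ x y z : V, d x z ≤ d x y + d y z)
    (hA0 : A 0 = Set.univ)
    (hchain : ∀ i, A (i + 1) ⊆ A i)
    (hAk : A k = ∅)
    (hAk1 : (A (k - 1)).Nonempty)
    (hpmem : ∀ i, i ≤ k - 1 → ∀ u, p i u ∈ A i)
    (hpdist : ∀ i, i ≤ k - 1 → ∀ u, d u (p i u) = distToSet d (A i) u)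
    (hp0 : ∀ u : V, p 0 u = u)
    (u v : V) :
    ({ e : ℝ≥0∞ | ∃ j ≤ k - 1, ∃ x y : V,
        ((x, y) = (u, v) ∨ (x, y) = (v, u)) ∧ p j x ∈ bunch d A k y ∧
        e = d x (p j x) + d (p j x) y }).Nonempty ∧
    d u v ≤ sInf { e : ℝ≥0∞ | ∃ j ≤ k - 1, ∃ x y : V,
        ((x, y) = (u, v) ∨ (x, y) = (v, u)) ∧ p j x ∈ bunch d A k y ∧
        e = d x (p j x) + d (p j x) y } ∧
    sInf { e : ℝ≥0∞ | ∃ j ≤ k - 1, ∃ x y : V,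
        ((x, y) = (u, v) ∨ (x, y) = (v, u)) ∧ p j x ∈ bunch d A k y ∧
        e = d x (p j x) + d (p j x) y } ≤ ((2 * k - 1 : ℕ) : ℝ≥0∞) * d u v := by
  classical
  set S := { e : ℝ≥0∞ | ∃ j ≤ k - 1, ∃ x y : V,
        ((x, y) = (u, v) ∨ (x, y) = (v, u)) ∧ p j x ∈ bunch d A k y ∧
        e = d x (p j x) + d (p j x) y } with hS
  -- key: from a good starting point, we can find a small estimate in S
  have key : ∀ m : ℕ, ∀ i : ℕ, i < k → k - 1 - i ≤ m → ∀ x y : V,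
      ((x, y) = (u, v) ∨ (x, y) = (v, u)) →
      d x (p i x) ≤ (i : ℝ≥0∞) * d u v →
      ∃ e ∈ S, e ≤ ((2 * k - 1 : ℕ) : ℝ≥0∞) * d u v := by
    intro m
    induction m with
    | zero =>
      intro i hik him x y hxy hd
      -- i = k - 1, so A (i+1) = ∅ and p i x ∈ bunch d A k y automatically
      have hik' : i = k - 1 := by omega
      have hdxy : d x y = d u v := by
        rcases hxy with h | h
        · rw [show x = _ from congrArg Prod.fst h, show y = _ from congrArg Prod.snd h]
        · rw [show x = _ from congrArg Prod.fst h, show y = _ from congrArg Prod.snd h]; exact hdsymm v u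
      have hmem : p i x ∈ bunch d A k y := by
        simp only [bunch, Set.mem_iUnion, Finset.mem_range]
        refine ⟨i, hik, hpmem i (by omega) x, ?_⟩
        have : distToSet d (A (i + 1)) y = ⊤ := by
          have : A (i + 1) = ∅ := by rw [show i + 1 = k by omega]; exact hAk
          simp [distToSet, this]
        rw [this]
        exact lt_top_iff_ne_top.mpr (hfin y (p i x))
      refine ⟨d x (p i x) + d (p i x) y, ⟨i, by omega, x, y, hxy, hmem, rfl⟩, ?_⟩
      have h2 : d (p i x) y ≤ (i : ℝ≥0∞) * d u v + d u v := by
        calc d (p i x) y ≤ d (p i x) x + d x y := htri _ _ _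
          _ = d x (p i x) + d u v := by rw [hdsymm, hdxy]
          _ ≤ (i : ℝ≥0∞) * d u v + d u v := add_le_add hd le_rfl
      calc d x (p i x) + d (p i x) y
          ≤ (i : ℝ≥0∞) * d u v + ((i : ℝ≥0∞) * d u v + d u v) := add_le_add hd h2
        _ = ((2 * i + 1 : ℕ) : ℝ≥0∞) * d u v := by push_cast; ring
        _ ≤ ((2 * k - 1 : ℕ) : ℝ≥0∞) * d u v :=
            mul_le_mul_of_nonneg_right (Nat.cast_le.mpr (by omega)) (by positivity)
    | succ n ih =>
      intro i hik him x y hxy hd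
      have hdxy : d x y = d u v := by
        rcases hxy with h | h
        · rw [show x = _ from congrArg Prod.fst h, show y = _ from congrArg Prod.snd h]
        · rw [show x = _ from congrArg Prod.fst h, show y = _ from congrArg Prod.snd h]; exact hdsymm v u
      by_cases hmem : p i x ∈ bunch d A k y
      · refine ⟨d x (p i x) + d (p i x) y, ⟨i, by omega, x, y, hxy, hmem, rfl⟩, ?_⟩
        have h2 : d (p i x) y ≤ (i : ℝ≥0∞) * d u v + d u v := by
          calc d (p i x) y ≤ d (p i x) x + d x y := htri _ _ _
            _ = d x (p i x) + d u v := by rw [hdsymm, hdxy]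
            _ ≤ (i : ℝ≥0∞) * d u v + d u v := add_le_add hd le_rfl
        calc d x (p i x) + d (p i x) y
            ≤ (i : ℝ≥0∞) * d u v + ((i : ℝ≥0∞) * d u v + d u v) := add_le_add hd h2
          _ = ((2 * i + 1 : ℕ) : ℝ≥0∞) * d u v := by push_cast; ring
          _ ≤ ((2 * k - 1 : ℕ) : ℝ≥0∞) * d u v :=
              mul_le_mul_of_nonneg_right (Nat.cast_le.mpr (by omega)) (by positivity)
      · -- p i x ∉ B(y), so d(y, A_{i+1}) ≤ d(y, p i x)
        have hle : distToSet d (A (i + 1)) y ≤ d y (p i x) := by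
          by_contra hcon
          push_neg at hcon
          exact hmem (by
            simp only [bunch, Set.mem_iUnion, Finset.mem_range]
            exact ⟨i, hik, hpmem i (by omega) x, hcon⟩)
        have hik2 : i + 1 < k := by
          by_contra hcon
          have hAe : A (i + 1) = ∅ := by
            have : i + 1 = k := by omega
            rw [this]; exact hAk
          have : distToSet d (A (i + 1)) y = ⊤ := by simp [distToSet, hAe]
          rw [this] at hle
          exact hfin y (p i x) (top_le_iff.mp hle)
        have hd' : d y (p (i + 1) y) ≤ ((i + 1 : ℕ) : ℝ≥0∞) * d u v := by
          have := hpdist (i + 1) (by omega) y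
          calc d y (p (i + 1) y) = distToSet d (A (i + 1)) y := this
            _ ≤ d y (p i x) := hle
            _ ≤ d y x + d x (p i x) := htri _ _ _
            _ ≤ d u v + (i : ℝ≥0∞) * d u v := by
                refine add_le_add ?_ hd
                rw [hdsymm, hdxy]
            _ = ((i + 1 : ℕ) : ℝ≥0∞) * d u v := by push_cast; ring
        have hyx : ((y, x) = (u, v) ∨ (y, x) = (v, u)) := by
          rcases hxy with h | h
          · right; rw [show x = _ from congrArg Prod.fst h, show y = _ from congrArg Prod.snd h]
          · left; rw [show x = _ from congrArg Prod.fst h, show y = _ from congrArg Prod.snd h]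
        exact ih (i + 1) hik2 (by omega) y x hyx hd'
  obtain ⟨e, heS, hle⟩ := key (k - 1) 0 (by omega) (by omega) u v (Or.inl rfl)
    (by rw [hp0, hself]; positivity)
  refine ⟨⟨e, heS⟩, ?_, (sInf_le heS).trans hle⟩
  refine le_sInf ?_
  rintro e' ⟨j, hj, x, y, hxy, -, rfl⟩
  have hdxy : d x y = d u v := by
    rcases hxy with h | h
    · rw [show x = _ from congrArg Prod.fst h, show y = _ from congrArg Prod.snd h]
    · rw [show x = _ from congrArg Prod.fst h, show y = _ from congrArg Prod.snd h]; exact hdsymm v u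
  calc d u v = d x y := hdxy.symm
    _ ≤ d x (p j x) + d (p j x) y := htri _ _ _
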